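/- Let ω ⊂ ℝ² and suppose for all v ∈ H¹(ω)²: inf_{α∈ℝ} ‖curl v - 2α‖²_{L²(ω)} ≤ 2(C_K²-1)‖ε(v)‖²_{L²(ω)}. Then every divergence-free tensor field τ ∈ H(div, ω) of the form τ = ∇⊥v with v ∈ H¹(ω)² satisfies inf_{β∈ℝ} ‖tr τ - β‖_{L²(ω)} ≤ 2(C_K² - 1)^{1/2}·‖dev τ‖_{L²(ω)}, i.e., the dev-div constant satisfies C_A ≤ 2(C_K² - 1)^{1/2}. -/

import Mathlib

open Matrix

open MeasureTheory

noncomputable def normSq2 (A : Matrix (Fin 2) (Fin 2) ℝ) : ℝ :=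
  ∑ i, ∑ j, (A i j) ^ 2

noncomputable def symPart (A : Matrix (Fin 2) (Fin 2) ℝ) : Matrix (Fin 2) (Fin 2) ℝ :=
  ((1 : ℝ) / 2) • (A + Aᵀ)

noncomputable def devPart2 (τ : Matrix (Fin 2) (Fin 2) ℝ) : Matrix (Fin 2) (Fin 2) ℝ :=
  τ - (Matrix.trace τ / 2) • (1 : Matrix (Fin 2) (Fin 2) ℝ)

noncomputable def curlOf (F : Matrix (Fin 2) (Fin 2) ℝ) : ℝ := F 1 0 - F 0 1

/-- from the curl bound
inf_α ‖curl v - 2α‖²_{L²} ≤ 2(C_K²-1)‖ε(v)‖²_{L²}, every divergence-free tensor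
field τ = ∇⊥v satisfies the dev-div estimate
inf_β ‖tr τ - β‖_{L²} ≤ 2(C_K²-1)^{1/2}‖dev τ‖_{L²}, i.e. C_A ≤ 2(C_K²-1)^{1/2}. -/
theorem dev_div_constant_bound {Ω : Type*} [MeasurableSpace Ω] (μm : Measure Ω) (CK : ℝ)
    (hCK : 1 ≤ CK)
    (Dv : Ω → Matrix (Fin 2) (Fin 2) ℝ)
    (hcurl : (⨅ α : ℝ, ∫ x, (curlOf (Dv x) - 2 * α) ^ 2 ∂μm) ≤
      2 * (CK ^ 2 - 1) * ∫ x, normSq2 (symPart (Dv x)) ∂μm) :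
    let τ : Ω → Matrix (Fin 2) (Fin 2) ℝ :=
      fun x => Matrix.of fun i j => if j = 0 then -Dv x i 1 else Dv x i 0
    (⨅ β : ℝ, Real.sqrt (∫ x, (Matrix.trace (τ x) - β) ^ 2 ∂μm)) ≤
      2 * Real.sqrt (CK ^ 2 - 1) * Real.sqrt (∫ x, normSq2 (devPart2 (τ x)) ∂μm) := by
  intro τ
  have htr : ∀ x, Matrix.trace (τ x) = curlOf (Dv x) := by
    intro x
    simp [τ, Matrix.trace, Matrix.diag, Fin.sum_univ_two, curlOf, Matrix.of_apply]
    ring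
  have hns : ∀ x, normSq2 (devPart2 (τ x)) = normSq2 (symPart (Dv x)) := by
    intro x
    simp [τ, normSq2, devPart2, symPart, Matrix.trace, Matrix.diag, Fin.sum_univ_two,
      Matrix.one_apply, Matrix.transpose_apply, Matrix.sub_apply, Matrix.smul_apply,
      Matrix.add_apply, Matrix.of_apply]
    ring
  set f : ℝ → ℝ := fun β => ∫ x, (curlOf (Dv x) - β) ^ 2 ∂μm with hf
  have hfnn : ∀ β, 0 ≤ f β := fun β => integral_nonneg (fun x => sq_nonneg _)
  have hbddf : BddBelow (Set.range f) := ⟨0, by rintro _ ⟨β, rfl⟩; exact hfnn β⟩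
  have hbddg : BddBelow (Set.range fun α : ℝ => f (2 * α)) :=
    ⟨0, by rintro _ ⟨α, rfl⟩; exact hfnn _⟩
  have hInn : 0 ≤ ∫ x, normSq2 (symPart (Dv x)) ∂μm := by
    refine integral_nonneg fun x => ?_
    refine Finset.sum_nonneg fun i _ => Finset.sum_nonneg fun j _ => sq_nonneg _
  have hrange : (⨅ β : ℝ, f β) = ⨅ α : ℝ, f (2 * α) := by
    apply le_antisymm
    · exact le_ciInf fun α => ciInf_le hbddf (2 * α)
    · refine le_ciInf fun β => ?_
      have h2 : 2 * (β / 2) = β := by ring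
      have := ciInf_le hbddg (β / 2)
      rw [h2] at this
      exact this
  have hinf_le : (⨅ β : ℝ, f β) ≤ 2 * (CK ^ 2 - 1) * ∫ x, normSq2 (symPart (Dv x)) ∂μm := by
    rw [hrange]; exact hcurl
  have hCK1 : (0:ℝ) ≤ CK ^ 2 - 1 := by nlinarith
  have key : (⨅ β : ℝ, Real.sqrt (f β)) = Real.sqrt (⨅ β : ℝ, f β) :=
    (Monotone.map_ciInf_of_continuousAt (Real.continuous_sqrt.continuousAt)
      (fun _ _ h => Real.sqrt_le_sqrt h) hbddf).symm
  have hLHS : (⨅ β : ℝ, Real.sqrt (∫ x, (Matrix.trace (τ x) - β) ^ 2 ∂μm))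
      = ⨅ β : ℝ, Real.sqrt (f β) := by
    refine iInf_congr fun β => ?_
    congr 1
    simp only [htr]
    rfl
  have hRHSI : (∫ x, normSq2 (devPart2 (τ x)) ∂μm)
      = ∫ x, normSq2 (symPart (Dv x)) ∂μm := by
    refine integral_congr_ae (Filter.Eventually.of_forall fun x => ?_)
    exact hns x
  rw [hLHS, key, hRHSI]
  calc Real.sqrt (⨅ β : ℝ, f β)
      ≤ Real.sqrt (2 * (CK ^ 2 - 1) * ∫ x, normSq2 (symPart (Dv x)) ∂μm) :=
        Real.sqrt_le_sqrt hinf_le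
    _ ≤ Real.sqrt (4 * (CK ^ 2 - 1) * ∫ x, normSq2 (symPart (Dv x)) ∂μm) := by
        apply Real.sqrt_le_sqrt; nlinarith
    _ = 2 * Real.sqrt (CK ^ 2 - 1) * Real.sqrt (∫ x, normSq2 (symPart (Dv x)) ∂μm) := by
        rw [Real.sqrt_mul (by positivity), Real.sqrt_mul (by norm_num : (0:ℝ) ≤ 4),
          show Real.sqrt 4 = 2 by rw [show (4:ℝ) = 2^2 by norm_num, Real.sqrt_sq (by norm_num)]]
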